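/- For every r ≥ 1, the determinant of the (r+2)×(r+2) integer matrix A_{r,0} with (i,j) entry F^{(r)}_{i+j} for 0 ≤ i, j ≤ r+1 equals (−1)^{⌊(r+3)/2⌋}. -/

import Mathlib

/-- Hyperfibonacci numbers: `hfib 0 n = F_n`, `hfib (r+1) n = ∑_{k=0}^n hfib r k`. -/
def hfib : ℕ → ℕ → ℕ
  | 0, n => Nat.fib n
  | r + 1, n => ∑ k ∈ Finset.range (n + 1), hfib r k

open Finset Matrix




lemma hfib_succ_succ (s n : ℕ) : hfib (s+1) (n+1) = hfib (s+1) n + hfib s (n+1) := by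
  show (∑ k ∈ range (n+2), hfib s k) = (∑ k ∈ range (n+1), hfib s k) + hfib s (n+1)
  exact Finset.sum_range_succ _ _

lemma iter_le (r : ℕ) : ∀ m ≤ r, (fwdDiff 1)^[m] (fun n => (hfib r n : ℤ)) = fun n => (hfib (r-m) (n+m) : ℤ) := by
  intro m
  induction m with
  | zero => simp
  | succ m ih =>
    intro hm
    rw [Function.iterate_succ_apply', ih (by omega)]
    obtain ⟨t, ht⟩ : ∃ t, r - m = t + 1 := ⟨r - m - 1, by omega⟩
    have h1 : r - (m+1) = t := by omega
    rw [ht, h1]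
    funext n
    have h2 : hfib (t+1) (n+m+1) = hfib (t+1) (n+m) + hfib t (n+m+1) := hfib_succ_succ t (n+m)
    simp only [fwdDiff]
    have e : n + 1 + m = n + m + 1 := by omega
    rw [e, h2]
    push_cast
    ring

lemma iter_fib (r : ℕ) : ∀ s ≤ r, (fwdDiff 1)^[r+s] (fun n => (hfib r n : ℤ)) = fun n => (Nat.fib (n+(r-s)) : ℤ) := by
  intro s
  induction s with
  | zero => simpa [hfib] using iter_le r r le_rfl
  | succ s ih =>
    intro hs
    have h0 : r + (s+1) = (r+s) + 1 := by omega
    rw [h0, Function.iterate_succ_apply', ih (by omega)]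
    obtain ⟨t, ht⟩ : ∃ t, r - s = t + 1 := ⟨r - s - 1, by omega⟩
    have h2 : r - (s+1) = t := by omega
    rw [ht, h2]
    funext n
    have hf : Nat.fib (n + t + 2) = Nat.fib (n+t) + Nat.fib (n+t+1) := Nat.fib_add_two
    simp only [fwdDiff]
    have e1 : n + 1 + (t+1) = n + t + 2 := by omega
    have e2 : n + (t+1) = n + t + 1 := by omega
    rw [e1, e2, hf]
    push_cast
    ring

def dd (r m : ℕ) : ℤ := (fwdDiff 1)^[m] (fun n => (hfib r n : ℤ)) 0
def cc (r m : ℕ) : ℤ := dd r m - dd r (m+1) - dd r (m+2)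

lemma ddF (r s : ℕ) (hs : s ≤ r) : dd r (r+s) = (Nat.fib (r-s) : ℤ) := by
  unfold dd
  rw [iter_fib r s hs]
  norm_num

lemma dd1 (r : ℕ) : dd r (2*r+1) = 1 := by
  unfold dd
  rw [show 2*r + 1 = (r + r) + 1 from by ring, Function.iterate_succ_apply', iter_fib r r le_rfl]
  simp [fwdDiff]

lemma dd2 (r : ℕ) : dd r (2*r+2) = -1 := by
  unfold dd
  rw [show 2*r + 2 = ((r + r) + 1) + 1 from by ring, Function.iterate_succ_apply',
    Function.iterate_succ_apply', iter_fib r r le_rfl]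
  simp [fwdDiff]

lemma hfib_one (n : ℕ) : (hfib 1 n : ℤ) = (Nat.fib (n+2) : ℤ) - 1 := by
  have h : Nat.fib (n+2) = (∑ k ∈ range (n+1), Nat.fib k) + 1 := Nat.fib_succ_eq_succ_sum (n+1)
  have h2 : hfib 1 n = ∑ k ∈ range (n+1), Nat.fib k := by
    show (∑ k ∈ range (n+1), hfib 0 k) = _
    rfl
  rw [h2]
  omega

lemma ddrm1 (r : ℕ) (hr : 1 ≤ r) : dd r (r-1) = (Nat.fib (r+1) : ℤ) - 1 := by
  unfold dd
  rw [iter_le r (r-1) (by omega)]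
  show (hfib (r - (r-1)) (0 + (r-1)) : ℤ) = _
  rw [show r - (r-1) = 1 from by omega, show (0:ℕ) + (r-1) = r - 1 from by omega, hfib_one,
    show r - 1 + 2 = r + 1 from by omega]

lemma ccz (r : ℕ) (hr : 1 ≤ r) : ∀ m, r ≤ m → m ≤ 2*r → cc r m = 0 := by
  intro m h1 h2
  obtain ⟨s, rfl⟩ : ∃ s, m = r + s := ⟨m - r, by omega⟩
  have hsr : s ≤ r := by omega
  unfold cc
  rcases show s + 2 ≤ r ∨ s + 1 = r ∨ s = r from by omega with h | h | h
  · rw [show r+s+1 = r+(s+1) from by ring, show r+s+2 = r+(s+2) from by ring,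
      ddF r s (by omega), ddF r (s+1) (by omega), ddF r (s+2) (by omega)]
    obtain ⟨t, ht⟩ : ∃ t, r - s = t + 2 := ⟨r - s - 2, by omega⟩
    rw [ht, show r - (s+1) = t+1 from by omega, show r - (s+2) = t from by omega]
    have hf : Nat.fib (t + 2) = Nat.fib t + Nat.fib (t+1) := Nat.fib_add_two
    push_cast [hf]
    ring
  · rw [ddF r s (by omega), show r+s+1 = r + r from by omega, ddF r r le_rfl,
      show r+s+2 = 2*r+1 from by omega, dd1]
    rw [show r - s = 1 from by omega, show r - r = 0 from by omega]
    simp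
  · rw [show r+s+2 = 2*r+2 from by omega, show r+s+1 = 2*r+1 from by omega,
      show r + s = r + r from by omega, ddF r r le_rfl, dd1, dd2]
    simp [show r - r = 0 from by omega]

lemma ccr1 (r : ℕ) (hr : 1 ≤ r) : cc r (r-1) = -1 := by
  unfold cc
  rw [show r-1+1 = r+0 from by omega, show r-1+2 = r+1 from by omega,
    ddrm1 r hr, ddF r 0 (by omega), ddF r 1 hr]
  obtain ⟨t, rfl⟩ : ∃ t, r = t+1 := ⟨r-1, by omega⟩
  rw [show t+1-0 = t+1 from by omega, show t+1-1 = t from by omega]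
  have hf : Nat.fib (t + 2) = Nat.fib t + Nat.fib (t+1) := Nat.fib_add_two
  push_cast [hf]
  ring

-- anti-triangular Hankel-type determinant
lemma det_antitri : ∀ (n s : ℕ) (c : ℕ → ℤ),
    (∀ m, n ≤ m → m ≤ 2*n → c (s+m) = 0) → (n = 0 ∨ c (s + n - 1) = -1) →
    (Matrix.of fun i j : Fin n => c (s + i + j)).det = (-1)^(n*(n+1)/2) := by
  intro n
  induction n with
  | zero => intro s c _ _; simp [Matrix.det_fin_zero]
  | succ k ih =>
    intro s c hz hd
    have hd' : c (s + k) = -1 := by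
      rcases hd with h | h
      · omega
      · have : s + (k+1) - 1 = s + k := by omega
        rwa [this] at h
    rw [Matrix.det_succ_row _ (Fin.last k)]
    rw [Finset.sum_eq_single (0 : Fin (k+1))]
    · have hminor : (Matrix.of fun i j : Fin (k+1) => c (s + i + j)).submatrix
          (Fin.last k).succAbove (0 : Fin (k+1)).succAbove
          = Matrix.of fun i j : Fin k => c ((s+1) + i + j) := by
        ext i j
        simp only [Matrix.submatrix_apply, Fin.succAbove_last, Fin.succAbove_zero,
          Matrix.of_apply, Fin.coe_castSucc, Fin.val_succ]
        congr 1
        omega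
      rw [hminor, ih (s+1) c (by intro m h1 h2; have : s + 1 + m = s + (m+1) := by omega
                                 rw [this]; exact hz (m+1) (by omega) (by omega))
            (by rcases Nat.eq_zero_or_pos k with h | h
                · exact Or.inl h
                · right; have : s + 1 + k - 1 = s + k := by omega
                  rw [this]; exact hd')]
      have he : Matrix.of (fun i j : Fin (k+1) => c (s + i + j)) (Fin.last k) 0 = -1 := by
        simp only [Matrix.of_apply, Fin.val_last, Fin.val_zero, Nat.add_zero]
        exact hd'
      rw [he]
      obtain ⟨p, hp⟩ : ∃ p, k * (k+1) = 2 * p := (Nat.even_mul_succ_self k).elim (fun p hp => ⟨p, by omega⟩)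
      have hq : (k+1) * (k+2) = 2 * (p + (k+1)) := by
        have : (k+1) * (k+2) = k * (k+1) + 2 * (k+1) := by ring
        omega
      have e1 : k * (k+1) / 2 = p := by omega
      have e2 : (k+1) * (k+2) / 2 = p + (k+1) := by omega
      rw [e1, e2]
      simp only [Fin.val_last, Fin.val_zero, Nat.add_zero]
      rw [show p + (k+1) = (k + 0) + (p + 1) by ring, pow_add, pow_add, pow_succ]
      ring
    · intro j _ hj
      have : Matrix.of (fun i j : Fin (k+1) => c (s + i + j)) (Fin.last k) j = 0 := by
        simp only [Matrix.of_apply, Fin.val_last]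
        rw [show s + k + (j:ℕ) = s + (k + (j:ℕ)) from by omega]
        exact hz (k + j) (by have : (j:ℕ) ≠ 0 := fun h => hj (Fin.ext h); omega) (by omega)
      rw [this]; ring
    · intro h; exact absurd (Finset.mem_univ _) h



noncomputable section
variable (r : ℕ)

def LL (r : ℕ) : Matrix (Fin (r+2)) (Fin (r+2)) ℤ :=
  Matrix.of fun i k => (-1:ℤ)^((i:ℕ)-(k:ℕ)) * ((i:ℕ).choose (k:ℕ))

def RR (r : ℕ) : Matrix (Fin (r+2)) (Fin (r+2)) ℤ :=
  Matrix.of fun k j => (if (k:ℕ) = (j:ℕ) then 1 else 0) - (if (k:ℕ) = (j:ℕ)+1 then 1 else 0)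
    - (if (k:ℕ) = (j:ℕ)+2 then 1 else 0)

lemma detLL : (LL r).det = 1 := by
  have h : (LL r).BlockTriangular OrderDual.toDual := by
    intro i j hij
    have h1 : (i:ℕ) < (j:ℕ) := hij
    simp only [LL, Matrix.of_apply]
    rw [Nat.choose_eq_zero_of_lt h1]
    simp
  rw [Matrix.det_of_lowerTriangular _ h]
  apply Finset.prod_eq_one
  intro i _
  simp [LL]

lemma detRR : (RR r).det = 1 := by
  have h : (RR r).BlockTriangular OrderDual.toDual := by
    intro i j hij
    have h1 : (i:ℕ) < (j:ℕ) := hij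
    simp only [RR, Matrix.of_apply]
    split_ifs <;> omega
  rw [Matrix.det_of_lowerTriangular _ h]
  apply Finset.prod_eq_one
  intro i _
  simp only [RR, Matrix.of_apply]
  split_ifs <;> omega

lemma row_reduce (f : ℕ → ℤ) (i : Fin (r+2)) (l : ℕ) :
    ∑ k : Fin (r+2), (LL r i k) * f ((k:ℕ) + l) = (fwdDiff 1)^[(i:ℕ)] f l := by
  rw [fwdDiff_iter_eq_sum_shift]
  have h1 : ∑ k : Fin (r+2), (LL r i k) * f ((k:ℕ) + l)
      = ∑ k ∈ range (r+2), (-1:ℤ)^((i:ℕ)-k) * ((i:ℕ).choose k) * f (k + l) := by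
    rw [← Fin.sum_univ_eq_sum_range (fun k => (-1:ℤ)^((i:ℕ)-k) * ((i:ℕ).choose k) * f (k + l)) (r+2)]
    rfl
  rw [h1]
  rw [← Finset.sum_subset (Finset.range_subset_range.2 (show (i:ℕ)+1 ≤ r+2 by omega))
    (by intro k _ hk
        rw [Finset.mem_range, not_lt] at hk
        rw [Nat.choose_eq_zero_of_lt (by omega)]
        simp)]
  apply Finset.sum_congr rfl
  intro k _
  rw [smul_eq_mul, smul_eq_mul, mul_one, Nat.add_comm l k]

lemma B_apply (i j : Fin (r+2)) :
    (LL r * (Matrix.of fun i j : Fin (r + 2) => (hfib r ((i:ℕ) + (j:ℕ)) : ℤ)) * (LL r)ᵀ) i j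
      = (fwdDiff 1)^[(i:ℕ)+(j:ℕ)] (fun n => (hfib r n : ℤ)) 0 := by
  rw [Matrix.mul_apply]
  have h2 : ∑ l : Fin (r+2),
      (LL r * (Matrix.of fun i j : Fin (r + 2) => (hfib r ((i:ℕ) + (j:ℕ)) : ℤ))) i l * (LL r)ᵀ l j
      = ∑ l : Fin (r+2), (LL r j l) * ((fwdDiff 1)^[(i:ℕ)] (fun n => (hfib r n : ℤ))) ((l:ℕ) + 0) := by
    apply Finset.sum_congr rfl
    intro l _
    rw [Matrix.mul_apply, Matrix.transpose_apply]
    have h3 := row_reduce r (fun n => (hfib r n : ℤ)) i (l:ℕ)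
    simp only [Matrix.of_apply]
    rw [h3]
    simp only [Nat.add_zero]
    ring
  rw [h2]
  have h4 := row_reduce r ((fwdDiff 1)^[(i:ℕ)] (fun n => (hfib r n : ℤ))) j 0
  rw [h4, Nat.add_comm (i:ℕ) (j:ℕ), Function.iterate_add_apply]

lemma sum_mul_if (c : ℕ) (v : Fin (r+2) → ℤ) :
    ∑ k : Fin (r+2), v k * (if (k:ℕ) = c then (1:ℤ) else 0)
      = if h : c < r+2 then v ⟨c, h⟩ else 0 := by
  split
  · next h =>
    rw [Finset.sum_eq_single (⟨c, h⟩ : Fin (r+2))]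
    · simp
    · intro k _ hk
      rw [if_neg (by intro hh; exact hk (Fin.ext hh)), mul_zero]
    · intro hh; exact absurd (Finset.mem_univ _) hh
  · next h =>
    apply Finset.sum_eq_zero
    intro k _
    rw [if_neg (by have := k.isLt; omega), mul_zero]
end


-- the combined matrix
lemma X_apply (r : ℕ) (i j : Fin (r+2)) :
    (LL r * (Matrix.of fun i j : Fin (r + 2) => (hfib r ((i:ℕ) + (j:ℕ)) : ℤ)) * (LL r)ᵀ * RR r) i j
      = dd r ((i:ℕ)+(j:ℕ)) - (if (j:ℕ)+1 < r+2 then dd r ((i:ℕ)+(j:ℕ)+1) else 0)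
        - (if (j:ℕ)+2 < r+2 then dd r ((i:ℕ)+(j:ℕ)+2) else 0) := by
  rw [Matrix.mul_apply]
  have h1 : ∀ k : Fin (r+2),
      (LL r * (Matrix.of fun i j : Fin (r + 2) => (hfib r ((i:ℕ) + (j:ℕ)) : ℤ)) * (LL r)ᵀ) i k * RR r k j
      = (fun k : Fin (r+2) => dd r ((i:ℕ)+(k:ℕ))) k * (if (k:ℕ) = (j:ℕ) then (1:ℤ) else 0)
        - (fun k : Fin (r+2) => dd r ((i:ℕ)+(k:ℕ))) k * (if (k:ℕ) = (j:ℕ)+1 then (1:ℤ) else 0)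
        - (fun k : Fin (r+2) => dd r ((i:ℕ)+(k:ℕ))) k * (if (k:ℕ) = (j:ℕ)+2 then (1:ℤ) else 0) := by
    intro k
    rw [B_apply r i k]
    show dd r _ * _ = _
    simp only [RR, Matrix.of_apply]
    ring
  rw [Finset.sum_congr rfl (fun k _ => h1 k), Finset.sum_sub_distrib, Finset.sum_sub_distrib,
    sum_mul_if, sum_mul_if, sum_mul_if, dif_pos j.isLt]
  by_cases hc1 : (j:ℕ)+1 < r+2
  · by_cases hc2 : (j:ℕ)+2 < r+2
    · rw [dif_pos hc1, dif_pos hc2, if_pos hc1, if_pos hc2]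
      show dd r ((i:ℕ)+(j:ℕ)) - dd r ((i:ℕ) + ((j:ℕ)+1)) - dd r ((i:ℕ) + ((j:ℕ)+2))
        = dd r ((i:ℕ)+(j:ℕ)) - dd r ((i:ℕ)+(j:ℕ)+1) - dd r ((i:ℕ)+(j:ℕ)+2)
      rw [show (i:ℕ) + ((j:ℕ)+1) = (i:ℕ)+(j:ℕ)+1 from by omega,
        show (i:ℕ) + ((j:ℕ)+2) = (i:ℕ)+(j:ℕ)+2 from by omega]
    · rw [dif_pos hc1, dif_neg hc2, if_pos hc1, if_neg hc2]
      show dd r ((i:ℕ)+(j:ℕ)) - dd r ((i:ℕ) + ((j:ℕ)+1)) - 0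
        = dd r ((i:ℕ)+(j:ℕ)) - dd r ((i:ℕ)+(j:ℕ)+1) - 0
      rw [show (i:ℕ) + ((j:ℕ)+1) = (i:ℕ)+(j:ℕ)+1 from by omega]
  · have hc2 : ¬ ((j:ℕ)+2 < r+2) := by omega
    rw [dif_neg hc1, dif_neg hc2, if_neg hc1, if_neg hc2]

lemma negpow_congr (a b : ℕ) (h : a % 2 = b % 2) : (-1:ℤ)^a = (-1:ℤ)^b := by
  rcases Nat.even_or_odd a with ha | ha
  · have hb : Even b := by rw [Nat.even_iff] at *; omega
    rw [ha.neg_one_pow, hb.neg_one_pow]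
  · have hb : Odd b := by rw [Nat.odd_iff] at *; omega
    rw [ha.neg_one_pow, hb.neg_one_pow]

lemma parity_exp (r : ℕ) : ((r+3)/2 + (r+1)) % 2 = ((r+1+3)/2) % 2 := by
  rcases Nat.even_or_odd r with ⟨t, rfl⟩ | ⟨t, rfl⟩ <;> omega

lemma parity_final (r : ℕ) : (-1:ℤ)^(r*(r+1)/2) * (-1) = (-1:ℤ)^((r+3)/2) := by
  induction r with
  | zero => norm_num
  | succ r ih =>
    obtain ⟨p, hp⟩ : ∃ p, r*(r+1) = 2*p := by
      rcases Nat.even_mul_succ_self r with ⟨p, hp⟩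
      exact ⟨p, by omega⟩
    have e1 : r*(r+1)/2 = p := by rw [hp]; omega
    have e2 : (r+1)*(r+2)/2 = p + (r+1) := by
      rw [show (r+1)*(r+2) = r*(r+1) + 2*(r+1) from by ring, hp]
      omega
    rw [e1] at ih
    rw [e2]
    calc (-1:ℤ)^(p + (r+1)) * (-1)
        = ((-1:ℤ)^p * (-1)) * (-1)^(r+1) := by rw [pow_add]; ring
      _ = (-1:ℤ)^((r+3)/2) * (-1)^(r+1) := by rw [ih]
      _ = (-1:ℤ)^((r+3)/2 + (r+1)) := (pow_add (-1:ℤ) _ _).symm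
      _ = (-1:ℤ)^((r+1+3)/2) := negpow_congr _ _ (parity_exp r)

/-- `det A_{r,0} = (-1)^⌊(r+3)/2⌋` where `A_{r,0}` is the
`(r+2)×(r+2)` Hankel matrix with `(i,j)` entry `F^{(r)}_{i+j}`. -/
theorem stmt_14 (r : ℕ) (hr : 1 ≤ r) :
    (Matrix.of fun i j : Fin (r + 2) => (hfib r (i + j) : ℤ)).det =
      (-1) ^ ((r + 3) / 2) := by
  set M : Matrix (Fin (r+2)) (Fin (r+2)) ℤ :=
    Matrix.of fun i j : Fin (r + 2) => (hfib r ((i:ℕ) + (j:ℕ)) : ℤ) with hM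
  set X : Matrix (Fin (r+2)) (Fin (r+2)) ℤ := LL r * M * (LL r)ᵀ * RR r with hX
  have hdet : X.det = M.det := by
    rw [hX, Matrix.det_mul, Matrix.det_mul, Matrix.det_mul, detLL, detRR,
      Matrix.det_transpose, detLL]
    ring
  rw [← hdet]
  -- block decomposition
  have e : Fin r ⊕ Fin 2 ≃ Fin (r+2) := finSumFinEquiv
  rw [← Matrix.det_submatrix_equiv_self (finSumFinEquiv : Fin r ⊕ Fin 2 ≃ Fin (r+2)) X]
  rw [← Matrix.fromBlocks_toBlocks (X.submatrix finSumFinEquiv finSumFinEquiv)]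
  have hC : (X.submatrix (finSumFinEquiv : Fin r ⊕ Fin 2 ≃ Fin (r+2))
      (finSumFinEquiv : Fin r ⊕ Fin 2 ≃ Fin (r+2))).toBlocks₂₁ = 0 := by
    ext i j
    simp only [Matrix.toBlocks₂₁, Matrix.submatrix_apply, Matrix.of_apply,
      finSumFinEquiv_apply_left, finSumFinEquiv_apply_right, Matrix.zero_apply]
    rw [hX, X_apply]
    have hi : ((Fin.natAdd r i : Fin (r+2)) : ℕ) = r + (i:ℕ) := rfl
    have hj : ((Fin.castAdd 2 j : Fin (r+2)) : ℕ) = (j:ℕ) := rfl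
    rw [hi, hj, if_pos (by have := j.isLt; omega), if_pos (by have := j.isLt; omega)]
    have := ccz r hr (r + (i:ℕ) + (j:ℕ)) (by omega) (by have := i.isLt; have := j.isLt; omega)
    unfold cc at this
    omega
  rw [hC, Matrix.det_fromBlocks_zero₂₁]
  -- block A
  have hA : (X.submatrix (finSumFinEquiv : Fin r ⊕ Fin 2 ≃ Fin (r+2))
      (finSumFinEquiv : Fin r ⊕ Fin 2 ≃ Fin (r+2))).toBlocks₁₁
      = Matrix.of fun i j : Fin r => cc r (0 + (i:ℕ) + (j:ℕ)) := by
    ext i j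
    simp only [Matrix.toBlocks₁₁, Matrix.submatrix_apply, Matrix.of_apply,
      finSumFinEquiv_apply_left]
    rw [hX, X_apply]
    have hi : ((Fin.castAdd 2 i : Fin (r+2)) : ℕ) = (i:ℕ) := rfl
    have hj : ((Fin.castAdd 2 j : Fin (r+2)) : ℕ) = (j:ℕ) := rfl
    rw [hi, hj, if_pos (by have := j.isLt; omega), if_pos (by have := j.isLt; omega)]
    unfold cc
    rw [show (0:ℕ) + (i:ℕ) + (j:ℕ) = (i:ℕ) + (j:ℕ) from by omega]
  have hdetA : (X.submatrix (finSumFinEquiv : Fin r ⊕ Fin 2 ≃ Fin (r+2))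
      (finSumFinEquiv : Fin r ⊕ Fin 2 ≃ Fin (r+2))).toBlocks₁₁.det = (-1:ℤ)^(r*(r+1)/2) := by
    rw [hA]
    exact det_antitri r 0 (cc r) (fun m h1 h2 => by
        rw [show (0:ℕ) + m = m from by omega]; exact ccz r hr m h1 h2)
      (Or.inr (by rw [show (0:ℕ) + r - 1 = r - 1 from by omega]; exact ccr1 r hr))
  -- block D
  have hdetD : (X.submatrix (finSumFinEquiv : Fin r ⊕ Fin 2 ≃ Fin (r+2))
      (finSumFinEquiv : Fin r ⊕ Fin 2 ≃ Fin (r+2))).toBlocks₂₂.det = -1 := by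
    rw [Matrix.det_fin_two]
    have hval : ∀ (i j : Fin 2), (X.submatrix (finSumFinEquiv : Fin r ⊕ Fin 2 ≃ Fin (r+2))
        (finSumFinEquiv : Fin r ⊕ Fin 2 ≃ Fin (r+2))).toBlocks₂₂ i j
        = dd r (r + (i:ℕ) + (r + (j:ℕ))) - (if r + (j:ℕ)+1 < r+2 then dd r (r + (i:ℕ) + (r + (j:ℕ))+1) else 0)
          - (if r + (j:ℕ)+2 < r+2 then dd r (r + (i:ℕ) + (r + (j:ℕ))+2) else 0) := by
      intro i j
      simp only [Matrix.toBlocks₂₂, Matrix.submatrix_apply, Matrix.of_apply,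
        finSumFinEquiv_apply_right]
      rw [hX, X_apply]
      rfl
    rw [hval 0 0, hval 0 1, hval 1 0, hval 1 1]
    norm_num
    rw [show r+1+(r+1) = 2*r+2 from by omega, show r+1+r+1 = 2*r+2 from by omega,
      show r+(r+1) = 2*r+1 from by omega, show r+1+r = 2*r+1 from by omega,
      show r+r+1 = 2*r+1 from by omega, ddF r r le_rfl, dd1, dd2,
      show r - r = 0 from by omega]
    norm_num
  rw [hdetA, hdetD]
  exact parity_final r
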